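/- Let V be a normal supervisor on the plant G, let the attack constraint be normal (Σ_{c,A} ⊆ Σ_{o,A}), and suppose AP_dmg ≠ ∅. Then the attacker A^sup is enabling and successful; that is, A^sup(P̂(w)) ⊇ V(w) ∩ Σ_{c,A} for all w ∈ P_o(L(V/G)), and ∅ ≠ L(V_{A^sup}/G) \ L(V/G) ⊆ L_dmg. -/
import Mathlib


open scoped Classical

namespace ActuatorAttack

variable {A : Type*}

/-- Natural projection onto a sub-alphabet `S`: erase the letters not in `S`. -/
noncomputable def proj (S : Set A) (l : List A) : List A :=
  l.filter (fun a => decide (a ∈ S))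

/-- The least language containing `ε` and closed under appending an event `σ`
allowed by `allow` at `s`, provided the result lies in the plant language `LG`. -/
inductive Lang (LG : Set (List A)) (allow : List A → Set A) : List A → Prop
  | nil : Lang LG allow []
  | snoc {s : List A} {σ : A} : Lang LG allow s → σ ∈ allow s →
      (s ++ [σ]) ∈ LG → Lang LG allow (s ++ [σ])

/-- The closed-loop language `L(V/G)`. -/
def LVG (LG : Set (List A)) (So : Set A) (V : List A → Set A) :
    Set (List A) :=
  {s | Lang LG (fun t => V (proj So t)) s}

/-- Auxiliary function for the attacker-observation map: `pre` is the prefix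
of the supervisor observation sequence already processed. -/
noncomputable def phatAux (V : List A → Set A) (SoA : Set A) :
    List A → List A → List (List A × Set A)
  | _, [] => []
  | pre, σ :: rest =>
      (proj SoA [σ], V (pre ++ [σ])) :: phatAux V SoA (pre ++ [σ]) rest

/-- The attacker-observation map `P̂`: the i-th letter of `P̂(σ₁⋯σₙ)` is
`(P_{o,A}(σᵢ), V(σ₁⋯σᵢ))`. -/
noncomputable def phat (V : List A → Set A) (SoA : Set A) (w : List A) :
    List (List A × Set A) :=
  phatAux V SoA [] w

/-- The attacked supervisor `V_A`. -/
noncomputable def VA (V : List A → Set A) (ScA SoA : Set A)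
    (Att : List (List A × Set A) → Set A) (w : List A) : Set A :=
  (V w \ ScA) ∪ Att (phat V SoA w)

/-- The attacked closed-loop language `L(V_A/G)`. -/
def LVAG (LG : Set (List A)) (So : Set A) (V : List A → Set A)
    (ScA SoA : Set A) (Att : List (List A × Set A) → Set A) : Set (List A) :=
  {s | Lang LG (fun t =>
      {σ | proj So t ∈ proj So '' LVG LG So V ∧
           σ ∈ VA V ScA SoA Att (proj So t)}) s}

/-- An attacker is enabling if it enables every attackable event enabled by
the supervisor. -/
def Enabling (LG : Set (List A)) (So : Set A) (V : List A → Set A)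
    (ScA SoA : Set A) (Att : List (List A × Set A) → Set A) : Prop :=
  ∀ w ∈ proj So '' LVG LG So V, V w ∩ ScA ⊆ Att (phat V SoA w)

/-- An attacker is successful if the attacked closed-loop language meets the
damage set, and everything outside `P_o⁻¹(P_o(L(V/G)))` lies in `L_dmg·Σ*`. -/
def Successful (LG : Set (List A)) (So : Set A) (V : List A → Set A)
    (ScA SoA : Set A) (Att : List (List A × Set A) → Set A)
    (Ldmg : Set (List A)) : Prop :=
  (LVAG LG So V ScA SoA Att ∩ Ldmg).Nonempty ∧
  LVAG LG So V ScA SoA Att \ (proj So ⁻¹' (proj So '' LVG LG So V)) ⊆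
    {t | ∃ d ∈ Ldmg, d <+: t}

/-- `(s, σ)` is an attack pair. -/
def AttackPair (LG : Set (List A)) (So : Set A) (V : List A → Set A)
    (ScA SoA : Set A) (Ldmg : Set (List A)) (s : List A) (σ : A) : Prop :=
  s ∈ LVG LG So V ∧ σ ∈ ScA ∧ s ++ [σ] ∈ Ldmg ∧
  ∀ s' ∈ LVG LG So V,
    phat V SoA (proj So s) = phat V SoA (proj So s') →
    s' ++ [σ] ∈ LG → s' ++ [σ] ∈ Ldmg

/-- `En(s, σ)`: one-step `σ`-extensions in `L(G)` of strings of `L(V/G)` that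
are attacker-observation equivalent to `s`. -/
def En (LG : Set (List A)) (So : Set A) (V : List A → Set A)
    (SoA : Set A) (s : List A) (σ : A) : Set (List A) :=
  {t | ∃ s' ∈ LVG LG So V, t = s' ++ [σ] ∧ t ∈ LG ∧
       phat V SoA (proj So s) = phat V SoA (proj So s')}

/-- `I(ŵ)`: attackable events `σ` such that some string `s'` of `L(V/G)` with
attacker observation `ŵ` forms an attack pair `(s', σ)`. -/
def ISet (LG : Set (List A)) (So : Set A) (V : List A → Set A)
    (ScA SoA : Set A) (Ldmg : Set (List A))
    (w : List (List A × Set A)) : Set A :=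
  {σ | σ ∈ ScA ∧ ∃ s' ∈ LVG LG So V,
        phat V SoA (proj So s') = w ∧ AttackPair LG So V ScA SoA Ldmg s' σ}

/-- The supremal attacker `A^sup`. -/
def Asup (LG : Set (List A)) (So : Set A) (V : List A → Set A)
    (ScA SoA : Set A) (Ldmg : Set (List A))
    (w : List (List A × Set A)) : Set A :=
  {σ | ∃ s ∈ LVG LG So V, phat V SoA (proj So s) = w ∧
        σ ∈ V (proj So s) ∩ ScA} ∪
  ISet LG So V ScA SoA Ldmg w

lemma proj_append (S : Set A) (l m : List A) :
    proj S (l ++ m) = proj S l ++ proj S m := by simp [proj]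

lemma proj_singleton_mem (S : Set A) {σ : A} (h : σ ∈ S) :
    proj S [σ] = [σ] := by simp [proj, h]

lemma proj_singleton_not_mem (S : Set A) {σ : A} (h : σ ∉ S) :
    proj S [σ] = [] := by simp [proj, h]

lemma phatAux_V_eq (V : List A → Set A) (SoA : Set A) :
    ∀ (u u' pre pre' : List A), phatAux V SoA pre u = phatAux V SoA pre' u' →
      (u = [] ∧ u' = []) ∨ V (pre ++ u) = V (pre' ++ u') := by
  intro u
  induction u with
  | nil =>
    intro u' pre pre' h
    cases u' with
    | nil => exact Or.inl ⟨rfl, rfl⟩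
    | cons σ' rest' => simp [phatAux] at h
  | cons σ rest ih =>
    intro u' pre pre' h
    cases u' with
    | nil => simp [phatAux] at h
    | cons σ' rest' =>
      simp only [phatAux, List.cons.injEq, Prod.mk.injEq] at h
      obtain ⟨⟨_, hV⟩, htail⟩ := h
      rcases ih rest' (pre ++ [σ]) (pre' ++ [σ']) htail with ⟨h1, h2⟩ | heq
      · subst h1; subst h2
        right
        simpa using hV
      · right
        have e1 : pre ++ σ :: rest = (pre ++ [σ]) ++ rest := by simp
        have e2 : pre' ++ σ' :: rest' = (pre' ++ [σ']) ++ rest' := by simp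
        rw [e1, e2]; exact heq

lemma phat_V_eq (V : List A → Set A) (SoA : Set A) {u u' : List A}
    (h : phat V SoA u = phat V SoA u') : V u = V u' := by
  rcases phatAux_V_eq V SoA u u' [] [] h with ⟨h1, h2⟩ | heq
  · rw [h1, h2]
  · simpa using heq

lemma lvg_decomp {LG : Set (List A)} {So : Set A} {V : List A → Set A}
    {s : List A} (hs : Lang LG (fun t => V (proj So t)) s) :
    ∀ u σ, σ ∈ So → proj So s = u ++ [σ] →
      u ∈ proj So '' LVG LG So V ∧ σ ∈ V u := by
  induction hs with
  | nil => intro u σ _ h; simp [proj] at h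
  | @snoc q τ hq hτV hg ih =>
    intro u σ hσo h
    by_cases hτ : τ ∈ So
    · rw [proj_append, proj_singleton_mem _ hτ] at h
      obtain ⟨h1, h2⟩ := List.append_inj' h rfl
      have hστ : τ = σ := by simpa using h2
      subst hστ
      subst h1
      exact ⟨⟨q, hq, rfl⟩, hτV⟩
    · rw [proj_append, proj_singleton_not_mem _ hτ, List.append_nil] at h
      exact ih u σ hσo h

lemma normal_mem {So Sc : Set A} {LG : Set (List A)}
    (hpref : ∀ s t : List A, s <+: t → t ∈ LG → s ∈ LG)
    {V : List A → Set A} (hV : ∀ w, Scᶜ ⊆ V w) (hnormV : Sc ⊆ So) :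
    ∀ s, s ∈ LG → proj So s ∈ proj So '' LVG LG So V → s ∈ LVG LG So V := by
  intro s
  induction s using List.reverseRecOn with
  | nil => intro _ _; exact Lang.nil
  | append_singleton t σ ih =>
    intro hg himg
    have htg : t ∈ LG := hpref t _ ⟨[σ], rfl⟩ hg
    by_cases hσ : σ ∈ So
    · rw [proj_append, proj_singleton_mem _ hσ] at himg
      obtain ⟨s', hs', heq⟩ := himg
      obtain ⟨h1, h2⟩ := lvg_decomp hs' (proj So t) σ hσ heq
      exact Lang.snoc (ih htg h1) h2 hg
    · have hσc : σ ∉ Sc := fun h => hσ (hnormV h)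
      have himg' : proj So t ∈ proj So '' LVG LG So V := by
        rwa [proj_append, proj_singleton_not_mem _ hσ, List.append_nil] at himg
      exact Lang.snoc (ih htg himg') (hV _ hσc) hg

lemma lvg_subset_lvag {LG : Set (List A)} {So : Set A} {V : List A → Set A}
    {ScA SoA : Set A} {Ldmg : Set (List A)} {s : List A}
    (hs : s ∈ LVG LG So V) :
    s ∈ LVAG LG So V ScA SoA (Asup LG So V ScA SoA Ldmg) := by
  induction hs with
  | nil => exact Lang.nil
  | @snoc q σ hq hσV hg ih =>
    refine Lang.snoc ih ⟨⟨q, hq, rfl⟩, ?_⟩ hg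
    by_cases h : σ ∈ ScA
    · exact Or.inr (Or.inl ⟨q, hq, rfl, hσV, h⟩)
    · exact Or.inl ⟨hσV, h⟩

lemma lvag_subset {So Sc : Set A} {LG : Set (List A)}
    (hpref : ∀ s t : List A, s <+: t → t ∈ LG → s ∈ LG)
    {V : List A → Set A} (hV : ∀ w, Scᶜ ⊆ V w) (hnormV : Sc ⊆ So)
    {ScA SoA : Set A} {Ldmg : Set (List A)} {s : List A}
    (hs : s ∈ LVAG LG So V ScA SoA (Asup LG So V ScA SoA Ldmg)) :
    s ∈ LVG LG So V ∨ s ∈ Ldmg := by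
  induction hs with
  | nil => exact Or.inl Lang.nil
  | @snoc q σ hq hcond hg _ =>
    obtain ⟨himg, hσVA⟩ := hcond
    have hqg : q ∈ LG := hpref q _ ⟨[σ], rfl⟩ hg
    have hqV : q ∈ LVG LG So V := normal_mem hpref hV hnormV q hqg himg
    rcases hσVA with ⟨hσV, _⟩ | hA
    · exact Or.inl (Lang.snoc hqV hσV hg)
    · rcases hA with ⟨s₀, hs₀, hph, hσV, _⟩ | ⟨hσc, s', hs', hph, hap⟩
      · have hVeq : V (proj So s₀) = V (proj So q) := phat_V_eq V SoA hph
        exact Or.inl (Lang.snoc hqV (hVeq ▸ hσV) hg)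
      · exact Or.inr (hap.2.2.2 q hqV hph hg)

/-- If `AP_dmg ≠ ∅`, then `A^sup` is enabling and successful,
with `∅ ≠ L(V_{A^sup}/G) \ L(V/G) ⊆ L_dmg`. -/
theorem stmt_15 {A : Type*} [Fintype A] (So Sc : Set A) (LG : Set (List A))
    (hnil : [] ∈ LG) (hpref : ∀ s t : List A, s <+: t → t ∈ LG → s ∈ LG)
    (V : List A → Set A) (hV : ∀ w, Scᶜ ⊆ V w)
    (hnormV : Sc ⊆ So)
    (ScA SoA : Set A) (hcA : ScA ⊆ Sc) (hoA : SoA ⊆ So)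
    (hnormA : ScA ⊆ SoA)
    (Ldmg : Set (List A)) (hLd : Ldmg ⊆ LG)
    (hLdV : Ldmg ∩ LVG LG So V = ∅)
    (hAP : ∃ s σ, AttackPair LG So V ScA SoA Ldmg s σ) :
    Enabling LG So V ScA SoA (Asup LG So V ScA SoA Ldmg) ∧
    Successful LG So V ScA SoA (Asup LG So V ScA SoA Ldmg) Ldmg ∧
    (LVAG LG So V ScA SoA (Asup LG So V ScA SoA Ldmg) \
        LVG LG So V).Nonempty ∧
    LVAG LG So V ScA SoA (Asup LG So V ScA SoA Ldmg) \ LVG LG So V ⊆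
      Ldmg := by
  obtain ⟨s, σ, hap⟩ := hAP
  have hsV : s ∈ LVG LG So V := hap.1
  have hσc : σ ∈ ScA := hap.2.1
  have hdmg : s ++ [σ] ∈ Ldmg := hap.2.2.1
  have hdA : s ++ [σ] ∈ LVAG LG So V ScA SoA (Asup LG So V ScA SoA Ldmg) :=
    Lang.snoc (lvg_subset_lvag hsV)
      ⟨⟨s, hsV, rfl⟩, Or.inr (Or.inr ⟨hσc, s, hsV, rfl, hap⟩)⟩
      (hLd hdmg)
  have hdnV : s ++ [σ] ∉ LVG LG So V := by
    intro h
    have : s ++ [σ] ∈ Ldmg ∩ LVG LG So V := ⟨hdmg, h⟩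
    rw [hLdV] at this
    exact this
  have hsub : LVAG LG So V ScA SoA (Asup LG So V ScA SoA Ldmg) \
      LVG LG So V ⊆ Ldmg := by
    rintro t ⟨htA, htn⟩
    rcases lvag_subset hpref hV hnormV htA with h | h
    · exact absurd h htn
    · exact h
  refine ⟨?_, ⟨⟨s ++ [σ], hdA, hdmg⟩, ?_⟩, ⟨s ++ [σ], hdA, hdnV⟩, hsub⟩
  · rintro w ⟨t, htV, rfl⟩ τ hτ
    have hmem : τ ∈ {σ | ∃ s ∈ LVG LG So V,
        phat V SoA (proj So s) = phat V SoA (proj So t) ∧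
        σ ∈ V (proj So s) ∩ ScA} := ⟨t, htV, rfl, hτ⟩
    exact Set.mem_union_left _ hmem
  · rintro t ⟨htA, htn⟩
    rcases lvag_subset hpref hV hnormV htA with h | h
    · exact absurd (Set.mem_preimage.mpr ⟨t, h, rfl⟩ : t ∈ proj So ⁻¹' (proj So '' LVG LG So V)) htn
    · exact ⟨t, h, List.prefix_refl t⟩

end ActuatorAttack
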